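/- Let X ∈ ℝ^{n×p} and define τ₀ = max{τ : ∃ w ∈ ℝⁿ with ‖w‖₂ ≤ 1 such that Xᵀw/√n ⪰ τ·1}. Then τ₀² = min_{λ ∈ T^{p−1}} λᵀΣλ = min_{λ ∈ T^{p−1}} (1/n)‖Xλ‖₂², where Σ = XᵀX/n; geometrically, τ₀ equals the Euclidean distance from the origin to the convex hull of the columns of X/√n. -/

import Mathlib

open Matrix Finset

noncomputable section

/-- Squared Euclidean norm of a vector. -/
def sqNorm {n : ℕ} (v : Fin n → ℝ) : ℝ := ∑ i, (v i) ^ 2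

lemma sqNorm_nonneg {n : ℕ} (v : Fin n → ℝ) : 0 ≤ sqNorm v :=
  Finset.sum_nonneg fun i _ => sq_nonneg _

/-- if `τ₀ = max{τ : ∃ w, ‖w‖₂ ≤ 1, Xᵀw/√n ⪰ τ·1}`, then
`τ₀² = min_{λ ∈ T^{p−1}} λᵀΣλ = min_{λ ∈ T^{p−1}} (1/n)‖Xλ‖₂²` with `Σ = XᵀX/n`,
and `τ₀` is the distance from the origin to the convex hull of the columns of `X/√n`. -/
theorem stmt_2 (n p : ℕ) (hn : 0 < n) (hp : 0 < p) (X : Matrix (Fin n) (Fin p) ℝ)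
    (τ0 : ℝ)
    (hτ0 : IsGreatest {τ : ℝ | ∃ w : Fin n → ℝ, sqNorm w ≤ 1 ∧
      ∀ j, τ ≤ (X.transpose.mulVec w) j / Real.sqrt n} τ0) :
    IsLeast {v : ℝ | ∃ l ∈ stdSimplex ℝ (Fin p),
        v = l ⬝ᵥ ((1 / (n : ℝ)) • (X.transpose * X)).mulVec l} (τ0 ^ 2) ∧
    (∀ l : Fin p → ℝ, l ⬝ᵥ ((1 / (n : ℝ)) • (X.transpose * X)).mulVec l
        = (1 / (n : ℝ)) * sqNorm (X.mulVec l)) ∧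
    IsLeast {d : ℝ | ∃ v ∈ convexHull ℝ
        (Set.range fun j => fun i => X i j / Real.sqrt n),
      d = Real.sqrt (sqNorm v)} τ0 := by
  have hn0 : (0 : ℝ) < n := by exact_mod_cast hn
  have hsn : (0 : ℝ) < Real.sqrt n := Real.sqrt_pos.2 hn0
  have hsn2 : Real.sqrt n * Real.sqrt n = n := Real.mul_self_sqrt hn0.le
  set c : Fin p → (Fin n → ℝ) := fun j => fun i => X i j / Real.sqrt n with hc
  set g : (Fin p → ℝ) → (Fin n → ℝ) := fun l => fun i => X.mulVec l i / Real.sqrt n with hg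
  set K : Set (Fin n → ℝ) := convexHull ℝ (Set.range c) with hK
  -- the quadratic form identity (part 2)
  have hquad : ∀ l : Fin p → ℝ, l ⬝ᵥ ((1 / (n : ℝ)) • (X.transpose * X)).mulVec l
      = (1 / (n : ℝ)) * sqNorm (X.mulVec l) := by
    intro l
    rw [Matrix.smul_mulVec, dotProduct_smul, ← Matrix.mulVec_mulVec,
      Matrix.dotProduct_mulVec, Matrix.vecMul_transpose]
    simp only [smul_eq_mul, sqNorm, dotProduct, sq]
  -- sqNorm of g l
  have hsqg : ∀ l : Fin p → ℝ, sqNorm (g l) = (1 / (n : ℝ)) * sqNorm (X.mulVec l) := by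
    intro l
    simp only [sqNorm, hg, Finset.mul_sum, div_pow]
    refine Finset.sum_congr rfl fun i _ => ?_
    rw [Real.sq_sqrt hn0.le]
    ring
  -- the convex hull is the image of the simplex under g
  have hhull : K = g '' stdSimplex ℝ (Fin p) := by
    apply Set.Subset.antisymm
    · apply convexHull_min
      · rintro _ ⟨j, rfl⟩
        refine ⟨Pi.single j 1, single_mem_stdSimplex ℝ j, ?_⟩
        funext i
        simp [hg, hc, Matrix.mulVec_single]
      · rintro x hx y hy a b ha hb hab
        obtain ⟨la, hla, rfl⟩ := hx
        obtain ⟨lb, hlb, rfl⟩ := hy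
        refine ⟨a • la + b • lb, (convex_stdSimplex ℝ (Fin p)) hla hlb ha hb hab, ?_⟩
        funext i
        simp only [hg, Matrix.mulVec_add, Matrix.mulVec_smul, Pi.add_apply, Pi.smul_apply,
          smul_eq_mul]
        ring
    · rintro _ ⟨l, hl, rfl⟩
      have : g l = ∑ j, l j • c j := by
        funext i
        simp only [hg, hc, Matrix.mulVec, dotProduct, Finset.sum_apply, Pi.smul_apply,
          smul_eq_mul, Finset.sum_div]
        refine Finset.sum_congr rfl fun j _ => ?_
        ring
      rw [this]
      exact (convex_convexHull ℝ _).sum_mem (fun j _ => hl.1 j) hl.2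
        fun j _ => subset_convexHull ℝ _ (Set.mem_range_self j)
  -- minimizer of sqNorm on K
  have hKcpt : IsCompact K := (Set.finite_range c).isCompact_convexHull ℝ
  have hKne : K.Nonempty :=
    ⟨c ⟨0, hp⟩, subset_convexHull ℝ _ (Set.mem_range_self _)⟩
  have hcont : Continuous (sqNorm : (Fin n → ℝ) → ℝ) :=
    continuous_finset_sum _ fun i _ => (continuous_apply i).pow 2
  obtain ⟨v0, hv0K, hmin⟩ := hKcpt.exists_isMinOn hKne hcont.continuousOn
  have hKconv : Convex ℝ K := convex_convexHull ℝ _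
  -- variational inequality
  have hvar : ∀ u ∈ K, sqNorm v0 ≤ v0 ⬝ᵥ u := by
    intro u hu
    by_contra hlt
    push_neg at hlt
    set d : ℝ := v0 ⬝ᵥ u - sqNorm v0 with hd
    have hdneg : d < 0 := by simp [hd]; linarith
    have hip : ∀ i : Fin n, v0 i * u i = v0 i * v0 i + v0 i * (u i - v0 i) := fun i => by ring
    set b : ℝ := sqNorm (fun i => u i - v0 i) with hb
    have hbnn : 0 ≤ b := sqNorm_nonneg _
    have hdsum : d = ∑ i, v0 i * (u i - v0 i) := by
      simp only [hd, dotProduct, sqNorm, sq]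
      rw [← Finset.sum_sub_distrib]
      refine Finset.sum_congr rfl fun i _ => ?_
      ring
    have hbpos : 0 < b := by
      rcases lt_or_eq_of_le hbnn with h | h
      · exact h
      · exfalso
        have h0 : ∀ i ∈ Finset.univ, (u i - v0 i) ^ 2 = 0 := by
          rw [← Finset.sum_eq_zero_iff_of_nonneg fun i _ => sq_nonneg (u i - v0 i)]
          exact h.symm
        have : d = 0 := by
          rw [hdsum]
          refine Finset.sum_eq_zero fun i _ => ?_
          have := h0 i (Finset.mem_univ i)
          have hz : u i - v0 i = 0 := by
            have := sq_eq_zero_iff.mp this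
            exact this
          rw [hz, mul_zero]
        linarith
    set t : ℝ := min 1 (-d / b) with ht
    have htpos : 0 < t := lt_min one_pos (div_pos (neg_pos.2 hdneg) hbpos)
    have ht1 : t ≤ 1 := min_le_left _ _
    set w : Fin n → ℝ := fun i => v0 i + t * (u i - v0 i) with hw
    have hwK : w ∈ K := by
      have : w = (1 - t) • v0 + t • u := by
        funext i
        simp only [hw, Pi.add_apply, Pi.smul_apply, smul_eq_mul]
        ring
      rw [this]
      exact hKconv hv0K hu (by linarith) htpos.le (by ring)
    have hexp : sqNorm w = sqNorm v0 + (2 * t * d + t ^ 2 * b) := by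
      simp only [sqNorm, hw, hb, hdsum, Finset.mul_sum]
      rw [← Finset.sum_add_distrib, ← Finset.sum_add_distrib]
      refine Finset.sum_congr rfl fun i _ => ?_
      ring
    have htb : t * b ≤ -d := by
      have := min_le_right 1 (-d / b)
      calc t * b ≤ (-d / b) * b := by
            exact mul_le_mul_of_nonneg_right this hbnn
        _ = -d := by field_simp
    have hneg : 2 * t * d + t ^ 2 * b < 0 := by
      have h1 : t * (2 * d + t * b) < 0 :=
        mul_neg_of_pos_of_neg htpos (by nlinarith)
      nlinarith
    have h5 : sqNorm v0 ≤ sqNorm w := hmin hwK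
    linarith
  -- the candidate value
  set rt : ℝ := Real.sqrt (sqNorm v0) with hrt
  have hrtsq : rt * rt = sqNorm v0 := Real.mul_self_sqrt (sqNorm_nonneg v0)
  -- rt is in the tau-set
  have hmem : rt ∈ {τ : ℝ | ∃ w : Fin n → ℝ, sqNorm w ≤ 1 ∧
      ∀ j, τ ≤ (X.transpose.mulVec w) j / Real.sqrt n} := by
    by_cases h0 : sqNorm v0 = 0
    · refine ⟨0, ?_, ?_⟩
      · simp [sqNorm]
      · intro j
        have : rt = 0 := by rw [hrt, h0, Real.sqrt_zero]
        rw [this]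
        simp [Matrix.mulVec_zero]
    · have hpos : 0 < sqNorm v0 := lt_of_le_of_ne (sqNorm_nonneg v0) (Ne.symm h0)
      have hrtpos : 0 < rt := Real.sqrt_pos.2 hpos
      refine ⟨fun i => v0 i / rt, ?_, ?_⟩
      · have : sqNorm (fun i => v0 i / rt) = sqNorm v0 / (rt * rt) := by
          simp only [sqNorm, div_pow, Finset.sum_div, sq]
          refine Finset.sum_congr rfl fun i _ => ?_
          ring
        rw [this, hrtsq, div_self h0]
      · intro j
        have hcjK : c j ∈ K := subset_convexHull ℝ _ (Set.mem_range_self j)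
        have h1 : sqNorm v0 ≤ v0 ⬝ᵥ c j := hvar _ hcjK
        have h2 : (X.transpose.mulVec fun i => v0 i / rt) j / Real.sqrt n
            = (v0 ⬝ᵥ c j) / rt := by
          simp only [Matrix.mulVec, dotProduct, Matrix.transpose_apply, hc,
            Finset.sum_div]
          refine Finset.sum_congr rfl fun i _ => ?_
          ring
        rw [h2, le_div_iff₀ hrtpos]
        calc rt * rt = sqNorm v0 := hrtsq
          _ ≤ v0 ⬝ᵥ c j := h1
  -- rt is an upper bound of the tau-set
  have hub : ∀ τ ∈ {τ : ℝ | ∃ w : Fin n → ℝ, sqNorm w ≤ 1 ∧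
      ∀ j, τ ≤ (X.transpose.mulVec w) j / Real.sqrt n}, τ ≤ rt := by
    rintro τ ⟨w, hw1, hw2⟩
    obtain ⟨l, hl, hgl⟩ : ∃ l ∈ stdSimplex ℝ (Fin p), g l = v0 := by
      rw [hhull] at hv0K
      obtain ⟨l, hl, hgl⟩ := hv0K
      exact ⟨l, hl, hgl⟩
    have hA : τ ≤ w ⬝ᵥ v0 := by
      have h1 : τ = ∑ j, l j * τ := by
        rw [← Finset.sum_mul, hl.2, one_mul]
      have h2 : ∑ j, l j * τ ≤ ∑ j, l j * ((X.transpose.mulVec w) j / Real.sqrt n) :=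
        Finset.sum_le_sum fun j _ => mul_le_mul_of_nonneg_left (hw2 j) (hl.1 j)
      have h3 : ∑ j, l j * ((X.transpose.mulVec w) j / Real.sqrt n) = w ⬝ᵥ g l := by
        simp only [Matrix.mulVec, dotProduct, Matrix.transpose_apply, hg,
          Finset.sum_div, Finset.mul_sum]
        rw [Finset.sum_comm]
        refine Finset.sum_congr rfl fun i _ => Finset.sum_congr rfl fun j _ => ?_
        ring
      rw [hgl] at h3
      linarith
    have hB : w ⬝ᵥ v0 ≤ rt := by
      have hcs : (w ⬝ᵥ v0) ^ 2 ≤ sqNorm w * sqNorm v0 :=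
        Finset.sum_mul_sq_le_sq_mul_sq Finset.univ w v0
      have h4 : sqNorm w * sqNorm v0 ≤ sqNorm v0 :=
        mul_le_of_le_one_left (sqNorm_nonneg v0) hw1
      calc w ⬝ᵥ v0 ≤ |w ⬝ᵥ v0| := le_abs_self _
        _ = Real.sqrt ((w ⬝ᵥ v0) ^ 2) := (Real.sqrt_sq_eq_abs _).symm
        _ ≤ Real.sqrt (sqNorm v0) := Real.sqrt_le_sqrt (by linarith)
        _ = rt := rfl
    linarith
  have hτrt : τ0 = rt := hτ0.unique ⟨hmem, hub⟩
  have hτsq : τ0 ^ 2 = sqNorm v0 := by rw [hτrt, sq, hrtsq]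
  refine ⟨?_, hquad, ?_⟩
  · constructor
    · obtain ⟨l, hl, hgl⟩ : ∃ l ∈ stdSimplex ℝ (Fin p), g l = v0 := by
        rw [hhull] at hv0K
        obtain ⟨l, hl, hgl⟩ := hv0K
        exact ⟨l, hl, hgl⟩
      refine ⟨l, hl, ?_⟩
      rw [hquad l, ← hsqg l, hgl, hτsq]
    · rintro v ⟨l, hl, rfl⟩
      have hglK : g l ∈ K := by rw [hhull]; exact ⟨l, hl, rfl⟩
      have := hmin hglK
      simp only [Set.mem_setOf_eq] at this
      rw [hτsq, hquad l, ← hsqg l]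
      exact this
  · constructor
    · exact ⟨v0, hv0K, by rw [hτrt]⟩
    · rintro d ⟨v, hvK, rfl⟩
      rw [hτrt, hrt]
      exact Real.sqrt_le_sqrt (hmin hvK)
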